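/- Let d : V × V → K be a nondegenerate symmetric bilinear form over a finite field K of odd characteristic, and fix a nonsquare ω ∈ K. If 𝓧 and 𝓨 are two orthogonal bases of V with exactly s (respectively r) basis vectors x satisfying d(x,x) ∉ (K^×)², then s ≡ r mod 2. -/

import Mathlib

open Finset in
private lemma quadChar_prod_eq {K : Type*} [Field K] [Fintype K] [DecidableEq K]
    {n : ℕ} (a : Fin n → K) (ha : ∀ i, a i ≠ 0) :
    quadraticChar K (∏ i, a i)
      = (-1 : ℤ) ^ (univ.filter (fun i => ¬ IsSquare (a i))).card := by
  rw [map_prod]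
  rw [← Finset.prod_filter_mul_prod_filter_not univ (fun i => ¬ IsSquare (a i))]
  have h1 : ∏ i ∈ univ.filter (fun i => ¬ IsSquare (a i)), quadraticChar K (a i)
      = (-1 : ℤ) ^ (univ.filter (fun i => ¬ IsSquare (a i))).card := by
    rw [← Finset.prod_const]
    refine Finset.prod_congr rfl fun i hi => ?_
    exact quadraticChar_neg_one_iff_not_isSquare.mpr (Finset.mem_filter.mp hi).2
  have h2 : ∏ i ∈ univ.filter (fun i => ¬ ¬ IsSquare (a i)), quadraticChar K (a i) = 1 := by
    refine Finset.prod_eq_one fun i hi => ?_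
    exact (quadraticChar_one_iff_isSquare (ha i)).mpr (not_not.mp (Finset.mem_filter.mp hi).2)
  rw [h1, h2, mul_one]

private lemma parity_of_neg_one_pow (s r : ℕ) (h : ((-1 : ℤ)) ^ s = (-1 : ℤ) ^ r) :
    s % 2 = r % 2 := by
  rcases Nat.even_or_odd s with hs | hs <;> rcases Nat.even_or_odd r with hr | hr
  · rw [Nat.even_iff.mp hs, Nat.even_iff.mp hr]
  · rw [hs.neg_one_pow, hr.neg_one_pow] at h; norm_num at h
  · rw [hs.neg_one_pow, hr.neg_one_pow] at h; norm_num at h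
  · rw [Nat.odd_iff.mp hs, Nat.odd_iff.mp hr]

/-- For a nondegenerate symmetric bilinear form over a finite field of odd characteristic,
the number of vectors `x` in an orthogonal basis with `d(x,x)` a nonsquare is well defined
modulo 2. -/
theorem stmt_16 {K V : Type*} [Field K] [Fintype K] (hchar : ringChar K ≠ 2)
    [AddCommGroup V] [Module K V] (d : V →ₗ[K] V →ₗ[K] K)
    (hsymm : ∀ u v : V, d u v = d v u)
    (hnd : ∀ u : V, (∀ v : V, d u v = 0) → u = 0)
    {n : ℕ} (x y : Module.Basis (Fin n) K V)
    (hx : ∀ i j, i ≠ j → d (x i) (x j) = 0)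
    (hy : ∀ i j, i ≠ j → d (y i) (y j) = 0) :
    Nat.card {i : Fin n // ¬ IsSquare (d (x i) (x i))} % 2
      = Nat.card {i : Fin n // ¬ IsSquare (d (y i) (y i))} % 2 := by
  classical
  -- diagonal entries are nonzero
  have hnz : ∀ (b : Module.Basis (Fin n) K V), (∀ i j, i ≠ j → d (b i) (b j) = 0) →
      ∀ i, d (b i) (b i) ≠ 0 := by
    intro b hb i h0
    have : d (b i) = 0 := by
      apply b.ext
      intro j
      by_cases hij : i = j
      · subst hij; simpa using h0
      · simpa using hb i j hij
    have : b i = 0 := hnd (b i) fun v => by rw [this]; rfl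
    exact b.ne_zero i this
  -- Gram matrix of an orthogonal basis is diagonal
  have hdiag : ∀ (b : Module.Basis (Fin n) K V), (∀ i j, i ≠ j → d (b i) (b j) = 0) →
      LinearMap.toMatrix₂ b b d = Matrix.diagonal (fun i => d (b i) (b i)) := by
    intro b hb
    ext i j
    rw [LinearMap.toMatrix₂_apply]
    by_cases hij : i = j
    · subst hij; simp [Matrix.diagonal_apply_eq]
    · rw [Matrix.diagonal_apply_ne _ hij]; exact hb i j hij
  -- determinants differ by a nonzero square
  set P : Matrix (Fin n) (Fin n) K := x.toMatrix y with hP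
  have hPdet : P.det ≠ 0 := by
    have := x.invertibleToMatrix y
    exact (Matrix.isUnit_iff_isUnit_det P).mp (isUnit_of_invertible P) |>.ne_zero
  have hchange : LinearMap.toMatrix₂ y y d = P.transpose * LinearMap.toMatrix₂ x x d * P :=
    (LinearMap.toMatrix₂_mul_basis_toMatrix x x y y d).symm
  have hdet : (∏ i, d (y i) (y i)) = P.det ^ 2 * ∏ i, d (x i) (x i) := by
    have := congrArg Matrix.det hchange
    rw [hdiag y hy, hdiag x hx] at this
    simp only [Matrix.det_mul, Matrix.det_transpose, Matrix.det_diagonal] at this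
    rw [this]; ring
  -- apply the quadratic character
  have hchi : quadraticChar K (∏ i, d (y i) (y i))
      = quadraticChar K (∏ i, d (x i) (x i)) := by
    rw [hdet, map_mul, map_pow]
    have : quadraticChar K P.det = 1 ∨ quadraticChar K P.det = -1 :=
      quadraticChar_dichotomy hPdet
    rcases this with h | h <;> rw [h] <;> ring
  rw [quadChar_prod_eq _ (hnz x hx), quadChar_prod_eq _ (hnz y hy)] at hchi
  have hcx : Nat.card {i : Fin n // ¬ IsSquare (d (x i) (x i))}
      = (Finset.univ.filter (fun i => ¬ IsSquare (d (x i) (x i)))).card := by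
    rw [Nat.card_eq_fintype_card, Fintype.card_subtype]
  have hcy : Nat.card {i : Fin n // ¬ IsSquare (d (y i) (y i))}
      = (Finset.univ.filter (fun i => ¬ IsSquare (d (y i) (y i)))).card := by
    rw [Nat.card_eq_fintype_card, Fintype.card_subtype]
  rw [hcx, hcy]
  exact parity_of_neg_one_pow _ _ hchi.symm
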